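/- Let A = Σ_{i=1}^r λ_i E_i∘conj(E_i), where λ_1,…,λ_r are nonzero real numbers with |λ_1| > |λ_2| > ⋯ > |λ_r| > 0, and E_1,…,E_r ∈ ℂ^{n×n} are symmetric matrices with ⟨E_i,E_j⟩ = δ_ij. Define recursively A_0 = A, and for j = 1,…,r: let X̂_j be any maximizer of |⟨A_{j−1}, X∘conj(X)⟩| over symmetric matrices X ∈ ℂ^{n×n} with ‖X‖_F = 1, let λ̂_j = ⟨A_{j−1}, X̂_j∘conj(X̂_j)⟩, and set A_j = A_{j−1} − λ̂_j X̂_j∘conj(X̂_j). Then for every j = 1,…,r there is a complex number c_j with |c_j| = 1 such that λ̂_j = λ_j and X̂_j = c_j·E_j. -/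

import Mathlib

open scoped BigOperators

/-- Inner product of fourth-order complex tensors. -/
noncomputable def tInner {n : ℕ} (A B : Fin n → Fin n → Fin n → Fin n → ℂ) : ℂ :=
  ∑ i, ∑ j, ∑ k, ∑ l, A i j k l * starRingEnd ℂ (B i j k l)

/-- Frobenius norm of a complex matrix. -/
noncomputable def mNorm {n : ℕ} (X : Matrix (Fin n) (Fin n) ℂ) : ℝ :=
  Real.sqrt (∑ i, ∑ j, ‖X i j‖ ^ 2)

/-- The fourth-order tensor `X ∘ conj(X)`. -/
def conjOuter {n : ℕ} (X : Matrix (Fin n) (Fin n) ℂ) :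
    Fin n → Fin n → Fin n → Fin n → ℂ :=
  fun i j k l => X i j * starRingEnd ℂ (X k l)

noncomputable def toE {n : ℕ} (X : Matrix (Fin n) (Fin n) ℂ) :
    EuclideanSpace ℂ (Fin n × Fin n) := WithLp.toLp 2 (fun p : Fin n × Fin n => X p.1 p.2)

lemma toE_inner {n : ℕ} (X Y : Matrix (Fin n) (Fin n) ℂ) :
    (inner ℂ (toE Y) (toE X) : ℂ) = ∑ i, ∑ j, starRingEnd ℂ (Y i j) * X i j := by
  simp [toE, PiLp.inner_apply, RCLike.inner_apply, Fintype.sum_prod_type, mul_comm]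

lemma mNorm_toE {n : ℕ} (X : Matrix (Fin n) (Fin n) ℂ) :
    mNorm X = ‖toE X‖ := by
  rw [mNorm, EuclideanSpace.norm_eq]
  congr 1
  simp [toE, Fintype.sum_prod_type]

lemma sum4_swap {n r : ℕ} (S : Finset (Fin r)) (F : Fin r → Fin n → Fin n → Fin n → Fin n → ℂ) :
    (∑ i, ∑ j, ∑ k, ∑ l, ∑ t ∈ S, F t i j k l) = ∑ t ∈ S, ∑ i, ∑ j, ∑ k, ∑ l, F t i j k l :=
  calc (∑ i, ∑ j, ∑ k, ∑ l, ∑ t ∈ S, F t i j k l)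
      = ∑ i, ∑ j, ∑ k, ∑ t ∈ S, ∑ l, F t i j k l :=
        Finset.sum_congr rfl fun _ _ => Finset.sum_congr rfl fun _ _ =>
          Finset.sum_congr rfl fun _ _ => Finset.sum_comm
    _ = ∑ i, ∑ j, ∑ t ∈ S, ∑ k, ∑ l, F t i j k l :=
        Finset.sum_congr rfl fun _ _ => Finset.sum_congr rfl fun _ _ => Finset.sum_comm
    _ = ∑ i, ∑ t ∈ S, ∑ j, ∑ k, ∑ l, F t i j k l :=
        Finset.sum_congr rfl fun _ _ => Finset.sum_comm
    _ = ∑ t ∈ S, ∑ i, ∑ j, ∑ k, ∑ l, F t i j k l := Finset.sum_comm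

lemma conj_mul_self_eq (z : ℂ) : starRingEnd ℂ z * z = ((‖z‖ ^ 2 : ℝ) : ℂ) := by
  rw [mul_comm, Complex.mul_conj, Complex.normSq_eq_norm_sq]

theorem smroa_ordered_recovery {n r : ℕ}
    (lam : Fin r → ℝ) (E : Fin r → Matrix (Fin n) (Fin n) ℂ)
    (hlam0 : ∀ t, lam t ≠ 0)
    (hlamord : ∀ s t : Fin r, s < t → |lam t| < |lam s|)
    (hEsym : ∀ t, (E t).IsSymm)
    (hEorth : ∀ s t, (∑ i, ∑ j, E s i j * starRingEnd ℂ (E t i j)) =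
      if s = t then 1 else 0)
    (A : Fin (r + 1) → Fin n → Fin n → Fin n → Fin n → ℂ)
    (hA0 : ∀ i j k l, A 0 i j k l =
      ∑ t, (lam t : ℂ) * E t i j * starRingEnd ℂ (E t k l))
    (Xhat : Fin r → Matrix (Fin n) (Fin n) ℂ) (lamHat : Fin r → ℂ)
    (hXsym : ∀ s, (Xhat s).IsSymm) (hXnorm : ∀ s, mNorm (Xhat s) = 1)
    (hXmax : ∀ s, ∀ X : Matrix (Fin n) (Fin n) ℂ, X.IsSymm → mNorm X = 1 →
      ‖tInner (A s.castSucc) (conjOuter X)‖ ≤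
        ‖tInner (A s.castSucc) (conjOuter (Xhat s))‖)
    (hlamHat : ∀ s, lamHat s = tInner (A s.castSucc) (conjOuter (Xhat s)))
    (hrec : ∀ s : Fin r, ∀ i j k l, A s.succ i j k l =
      A s.castSucc i j k l - lamHat s * (Xhat s i j * starRingEnd ℂ (Xhat s k l))) :
    ∀ s : Fin r, ∃ c : ℂ, ‖c‖ = 1 ∧
      lamHat s = (lam s : ℂ) ∧ Xhat s = c • E s := by
  classical
  -- orthonormal family
  have he : Orthonormal ℂ (fun t => toE (E t)) := by
    rw [orthonormal_iff_ite]
    intro s t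
    rw [toE_inner]
    have h := congrArg (starRingEnd ℂ) (hEorth s t)
    simp only [map_sum, map_mul, Complex.conj_conj, apply_ite (starRingEnd ℂ),
      map_one, map_zero] at h
    rw [show (∑ i, ∑ j, starRingEnd ℂ (E s i j) * E t i j)
        = ∑ i, ∑ j, E t i j * starRingEnd ℂ (E s i j) from
      Finset.sum_congr rfl fun i _ => Finset.sum_congr rfl fun j _ => mul_comm _ _] at h
    rw [show (∑ i, ∑ j, starRingEnd ℂ (E s i j) * E t i j)
        = ∑ i, ∑ j, E t i j * starRingEnd ℂ (E s i j) from
      Finset.sum_congr rfl fun i _ => Finset.sum_congr rfl fun j _ => mul_comm _ _]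
    exact h
  have hEnorm : ∀ t, mNorm (E t) = 1 := fun t => by
    rw [mNorm_toE]; exact he.1 t
  have hdE : ∀ s t : Fin r, (inner ℂ (toE (E t)) (toE (E s)) : ℂ) = if t = s then 1 else 0 :=
    fun s t => orthonormal_iff_ite.mp he t s
  -- index sets
  set T : Fin (r + 1) → Finset (Fin r) :=
    (fun m => Finset.univ.filter (fun t : Fin r => m ≤ t.castSucc)) with hTdef
  have hmemT : ∀ (m : Fin (r + 1)) (t : Fin r), t ∈ T m ↔ m ≤ t.castSucc := by
    intro m t; simp [hTdef]
  -- main step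
  have key : ∀ s : Fin r,
      (∀ i j k l, A s.castSucc i j k l =
        ∑ t ∈ T s.castSucc, (lam t : ℂ) * E t i j * starRingEnd ℂ (E t k l)) →
      (∃ c : ℂ, ‖c‖ = 1 ∧ lamHat s = (lam s : ℂ) ∧ Xhat s = c • E s) ∧
        (∀ i j k l, A s.succ i j k l =
          ∑ t ∈ T s.succ, (lam t : ℂ) * E t i j * starRingEnd ℂ (E t k l)) := by
    intro s hs
    have heval : ∀ X : Matrix (Fin n) (Fin n) ℂ,
        tInner (A s.castSucc) (conjOuter X) =
          ∑ t ∈ T s.castSucc, (lam t : ℂ) *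
            (starRingEnd ℂ (inner ℂ (toE (E t)) (toE X) : ℂ) *
              (inner ℂ (toE (E t)) (toE X) : ℂ)) := by
      intro X
      unfold tInner conjOuter
      simp only [hs, Finset.sum_mul]
      rw [sum4_swap]
      refine Finset.sum_congr rfl fun t _ => ?_
      rw [toE_inner]
      rw [show (starRingEnd ℂ (∑ i, ∑ j, starRingEnd ℂ (E t i j) * X i j))
          = ∑ i, ∑ j, E t i j * starRingEnd ℂ (X i j) by
        simp [map_sum]]
      simp only [map_mul, Complex.conj_conj]
      simp only [Finset.sum_mul]
      simp only [Finset.mul_sum]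
      refine Finset.sum_congr rfl fun i _ => Finset.sum_congr rfl fun j _ => ?_
      refine Finset.sum_congr rfl fun k _ => Finset.sum_congr rfl fun l _ => ?_
      ring
    set v := toE (Xhat s) with hv
    have hvnorm : ‖v‖ = 1 := by rw [← mNorm_toE]; exact hXnorm s
    have hsmem : s ∈ T s.castSucc := (hmemT _ _).mpr le_rfl
    -- value at E s
    have hvalE : tInner (A s.castSucc) (conjOuter (E s)) = (lam s : ℂ) := by
      rw [heval, Finset.sum_eq_single_of_mem s hsmem]
      · rw [hdE s s, if_pos rfl]; simp
      · intro t _ hts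
        rw [hdE s t, if_neg hts]; simp
    have hub : |lam s| ≤ ‖tInner (A s.castSucc) (conjOuter (Xhat s))‖ := by
      have h := hXmax s (E s) (hEsym s) (hEnorm s)
      rwa [hvalE, Complex.norm_real, Real.norm_eq_abs] at h
    set c : Fin r → ℝ := fun t => ‖(inner ℂ (toE (E t)) v : ℂ)‖ ^ 2 with hcdef
    have hcnn : ∀ t, 0 ≤ c t := fun t => by positivity
    have hVeq : tInner (A s.castSucc) (conjOuter (Xhat s)) =
        ∑ t ∈ T s.castSucc, (lam t : ℂ) * ((c t : ℝ) : ℂ) := by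
      rw [heval]
      exact Finset.sum_congr rfl fun t _ => by rw [conj_mul_self_eq]
    have hbessel : ∑ t ∈ T s.castSucc, c t ≤ 1 := by
      have h := he.sum_inner_products_le (s := T s.castSucc) v
      rwa [hvnorm, one_pow] at h
    have habs1 : ‖tInner (A s.castSucc) (conjOuter (Xhat s))‖ ≤
        ∑ t ∈ T s.castSucc, |lam t| * c t := by
      rw [hVeq]
      refine le_trans (norm_sum_le _ _) (le_of_eq ?_)
      refine Finset.sum_congr rfl fun t _ => ?_
      rw [norm_mul, Complex.norm_real, Complex.norm_real, Real.norm_eq_abs, Real.norm_eq_abs,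
        abs_of_nonneg (hcnn t)]
    have hlamle : ∀ t ∈ T s.castSucc, |lam t| ≤ |lam s| := by
      intro t ht
      rcases eq_or_lt_of_le ((hmemT _ t).mp ht) with h | h
      · rw [Fin.castSucc_inj.mp h]
      · exact le_of_lt (hlamord s t (Fin.castSucc_lt_castSucc_iff.mp h))
    have h2 : ∑ t ∈ T s.castSucc, |lam t| * c t ≤ |lam s| * ∑ t ∈ T s.castSucc, c t := by
      rw [Finset.mul_sum]
      exact Finset.sum_le_sum fun t ht => mul_le_mul_of_nonneg_right (hlamle t ht) (hcnn t)
    have hlamspos : 0 < |lam s| := abs_pos.mpr (hlam0 s)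
    have hC1 : ∑ t ∈ T s.castSucc, c t = 1 := by
      have h1 : |lam s| * 1 ≤ |lam s| * ∑ t ∈ T s.castSucc, c t := by
        rw [mul_one]; exact le_trans hub (le_trans habs1 h2)
      have h3 := (mul_le_mul_iff_right₀ hlamspos).mp h1
      linarith
    have hS1 : ∑ t ∈ T s.castSucc, |lam t| * c t = |lam s| := by
      have := le_trans hub habs1
      have := h2
      rw [hC1] at this
      linarith
    have hzero : ∑ t ∈ T s.castSucc, (|lam s| - |lam t|) * c t = 0 := by
      have hsplit : ∑ t ∈ T s.castSucc, (|lam s| - |lam t|) * c t =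
          |lam s| * (∑ t ∈ T s.castSucc, c t) - ∑ t ∈ T s.castSucc, |lam t| * c t := by
        rw [Finset.mul_sum, ← Finset.sum_sub_distrib]
        exact Finset.sum_congr rfl fun t _ => by ring
      rw [hsplit, hC1, hS1]; ring
    have hct0 : ∀ t ∈ T s.castSucc, t ≠ s → c t = 0 := by
      intro t ht hts
      have hterm : (|lam s| - |lam t|) * c t = 0 :=
        (Finset.sum_eq_zero_iff_of_nonneg fun u hu =>
          mul_nonneg (sub_nonneg.2 (hlamle u hu)) (hcnn u)).mp hzero t ht
      have hslt : s < t := lt_of_le_of_ne (Fin.castSucc_le_castSucc_iff.mp ((hmemT _ t).mp ht))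
        (fun h => hts h.symm)
      have hlt : |lam t| < |lam s| := hlamord s t hslt
      rcases mul_eq_zero.mp hterm with h | h
      · linarith
      · exact h
    have hcs : c s = 1 := by
      rw [← hC1, Finset.sum_eq_single_of_mem s hsmem hct0]
    have hin1 : ‖(inner ℂ (toE (E s)) v : ℂ)‖ = 1 := by
      have h : ‖(inner ℂ (toE (E s)) v : ℂ)‖ ^ 2 = 1 := hcs
      have hnn := norm_nonneg (inner ℂ (toE (E s)) v : ℂ)
      rw [← Real.sqrt_sq hnn, h, Real.sqrt_one]
    have hnormEs : ‖toE (E s)‖ = 1 := he.1 s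
    have hes0 : toE (E s) ≠ 0 := by
      intro h0
      rw [h0, norm_zero] at hnormEs
      exact zero_ne_one hnormEs
    have hv0 : v ≠ 0 := by
      intro h0
      rw [h0, norm_zero] at hvnorm
      exact zero_ne_one hvnorm
    have hCS : ‖(inner ℂ (toE (E s)) v : ℂ)‖ = ‖toE (E s)‖ * ‖v‖ := by
      rw [hnormEs, hvnorm, hin1, one_mul]
    obtain ⟨cc, hcc0, hvc⟩ := (norm_inner_eq_norm_iff hes0 hv0).mp hCS
    have hccabs : ‖cc‖ = 1 := by
      have h : ‖v‖ = ‖cc‖ * ‖toE (E s)‖ := by rw [hvc, norm_smul]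
      rw [hvnorm, hnormEs, mul_one] at h
      rw [← h]
    have hXeq : Xhat s = cc • E s := by
      ext i j
      have h := congrArg (fun w => w (i, j)) hvc
      simpa [hv, toE, Matrix.smul_apply, smul_eq_mul] using h
    have hinner0 : ∀ t ∈ T s.castSucc, t ≠ s → (inner ℂ (toE (E t)) v : ℂ) = 0 := by
      intro t ht hts
      have h := hct0 t ht hts
      rw [hcdef] at h
      have := pow_eq_zero_iff (n := 2) (by norm_num) |>.mp h
      exact norm_eq_zero.mp this
    have hlams : lamHat s = (lam s : ℂ) := by
      rw [hlamHat s, heval, Finset.sum_eq_single_of_mem s hsmem]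
      · rw [conj_mul_self_eq, show (‖(inner ℂ (toE (E s)) v : ℂ)‖ : ℝ) ^ 2 = c s from rfl,
          hcs]
        simp
      · intro t ht hts
        rw [hinner0 t ht hts]
        simp
    -- the recursion step
    have hTsucc : T s.castSucc = insert s (T s.succ) := by
      ext t
      simp only [hmemT, Finset.mem_insert, Fin.castSucc_le_castSucc_iff,
        Fin.succ_le_castSucc_iff]
      constructor
      · intro h
        rcases eq_or_lt_of_le h with h | h
        · exact Or.inl h.symm
        · exact Or.inr h
      · rintro (rfl | h)
        · exact le_rfl
        · exact le_of_lt h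
    have hsnot : s ∉ T s.succ := by
      rw [hmemT]
      simp [Fin.succ_le_castSucc_iff]
    have hcc1 : cc * starRingEnd ℂ cc = 1 := by
      rw [Complex.mul_conj, Complex.normSq_eq_norm_sq, hccabs]
      norm_num
    have hInvsucc : ∀ i j k l, A s.succ i j k l =
        ∑ t ∈ T s.succ, (lam t : ℂ) * E t i j * starRingEnd ℂ (E t k l) := by
      intro i j k l
      have hXX : Xhat s i j * starRingEnd ℂ (Xhat s k l) =
          E s i j * starRingEnd ℂ (E s k l) := by
        rw [hXeq]
        simp only [Matrix.smul_apply, smul_eq_mul, map_mul]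
        calc cc * E s i j * (starRingEnd ℂ cc * starRingEnd ℂ (E s k l))
            = (cc * starRingEnd ℂ cc) * (E s i j * starRingEnd ℂ (E s k l)) := by ring
          _ = E s i j * starRingEnd ℂ (E s k l) := by rw [hcc1, one_mul]
      rw [hrec s i j k l, hs i j k l, hTsucc, Finset.sum_insert hsnot, hlams, hXX]
      ring
    exact ⟨⟨cc, hccabs, hlams, hXeq⟩, hInvsucc⟩
  -- induction
  have invAll : ∀ m : Fin (r + 1), ∀ i j k l, A m i j k l =
      ∑ t ∈ T m, (lam t : ℂ) * E t i j * starRingEnd ℂ (E t k l) := by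
    intro m
    induction m using Fin.induction with
    | zero =>
      intro i j k l
      rw [hA0]
      refine (Finset.sum_subset (Finset.subset_univ _) ?_).symm
      intro t _ ht
      exact absurd ((hmemT 0 t).mpr (Fin.zero_le _)) ht
    | succ s ih => exact (key s ih).2
  intro s
  exact (key s (invAll s.castSucc)).1
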